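/- Let A > 0, B ≤ 0 with A + B > 0, let δ̄_K > 0 be the unique positive solution of A·x + x/(1+x) = c/K for fixed c > 0 and integer K ≥ 1. Then: (i) δ̄_K is strictly decreasing in K; (ii) K·δ̄_K = c/(A + 1/(1+δ̄_K)) is strictly decreasing in K; and (iii) the quantity γ_K := K·δ̄_K/(1 + B/(A + (1+δ̄_K)^{-2})) satisfies γ_K ≥ γ_{K+1} for all K ≥ 1. -/
import Mathlib


/-- Let `A > 0`, `B ≤ 0`, `A + B > 0`, `c > 0` and for each `K ≥ 1` let
`δ̄_K > 0` be the unique positive solution of `A·x + x/(1+x) = c/K`. Then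
(i) `δ̄_K` strictly decreases in `K`; (ii) `K·δ̄_K = c/(A + 1/(1+δ̄_K))` and
`K·δ̄_K` strictly decreases in `K`; (iii) the SINR
`γ_K = K·δ̄_K/(1 + B/(A + (1+δ̄_K)⁻²))` satisfies `γ_K ≥ γ_{K+1}`. -/
theorem sinr_decreasing_in_clusters (A B c : ℝ) (hA : 0 < A) (hB : B ≤ 0)
    (hAB : 0 < A + B) (hc : 0 < c) (d : ℕ → ℝ)
    (hd : ∀ K : ℕ, 1 ≤ K → 0 < d K ∧ A * d K + d K / (1 + d K) = c / K) :
    (∀ K : ℕ, 1 ≤ K → d (K + 1) < d K) ∧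
    (∀ K : ℕ, 1 ≤ K → (K : ℝ) * d K = c / (A + 1 / (1 + d K)) ∧
      ((K : ℝ) + 1) * d (K + 1) < (K : ℝ) * d K) ∧
    (∀ K : ℕ, 1 ≤ K →
      ((K : ℝ) + 1) * d (K + 1) / (1 + B / (A + (1 + d (K + 1))⁻¹ ^ 2))
        ≤ (K : ℝ) * d K / (1 + B / (A + (1 + d K)⁻¹ ^ 2))) := by
  have hpos : ∀ K : ℕ, 1 ≤ K → 0 < d K := fun K hK => (hd K hK).1
  have heq : ∀ K : ℕ, 1 ≤ K → A * d K + d K / (1 + d K) = c / K :=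
    fun K hK => (hd K hK).2
  -- monotonicity of f
  have hf : ∀ x y : ℝ, 0 < x → 0 < y → x ≤ y →
      A * x + x / (1 + x) ≤ A * y + y / (1 + y) := by
    intro x y hx hy hxy
    have h1x : (0:ℝ) < 1 + x := by linarith
    have h1y : (0:ℝ) < 1 + y := by linarith
    have h2 : x / (1 + x) ≤ y / (1 + y) := by
      rw [div_le_div_iff₀ h1x h1y]; nlinarith
    nlinarith
  have hdec : ∀ K : ℕ, 1 ≤ K → d (K + 1) < d K := by
    intro K hK
    by_contra h
    push_neg at h
    have hK1 : 1 ≤ K + 1 := Nat.le_succ_of_le hK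
    have hmono := hf (d K) (d (K+1)) (hpos K hK) (hpos (K+1) hK1) h
    rw [heq K hK, heq (K+1) hK1] at hmono
    have hKR : (1:ℝ) ≤ (K:ℝ) := by exact_mod_cast hK
    push_cast at hmono
    have h2 : c / ((K:ℝ)+1) < c / (K:ℝ) :=
      div_lt_div_of_pos_left hc (by linarith) (by linarith)
    linarith
  have hform : ∀ K : ℕ, 1 ≤ K → (K:ℝ) * d K = c / (A + 1 / (1 + d K)) := by
    intro K hK
    have hdK := hpos K hK
    have h1 : (0:ℝ) < 1 + d K := by linarith
    have hden : 0 < A + 1 / (1 + d K) := by positivity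
    have he := heq K hK
    have hKR : (0:ℝ) < (K:ℝ) := by exact_mod_cast hK
    rw [eq_div_iff (ne_of_gt hden)]
    field_simp at he ⊢
    nlinarith [he]
  have hKd : ∀ K : ℕ, 1 ≤ K → ((K:ℝ)+1) * d (K+1) < (K:ℝ) * d K := by
    intro K hK
    have hK1 : 1 ≤ K + 1 := Nat.le_succ_of_le hK
    have h1 := hform K hK
    have h2 := hform (K+1) hK1
    push_cast at h2
    rw [h1, h2]
    have hd1 := hpos K hK
    have hd2 := hpos (K+1) hK1
    have hlt := hdec K hK
    have ha : (0:ℝ) < 1 + d (K+1) := by linarith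
    have hb : (0:ℝ) < 1 + d K := by linarith
    have hinv : 1 / (1 + d K) < 1 / (1 + d (K+1)) :=
      one_div_lt_one_div_of_lt ha (by linarith)
    exact div_lt_div_of_pos_left hc (by positivity) (by linarith)
  refine ⟨hdec, fun K hK => ⟨hform K hK, hKd K hK⟩, ?_⟩
  intro K hK
  have hK1 : 1 ≤ K + 1 := Nat.le_succ_of_le hK
  have hd1 := hpos K hK
  have hd2 := hpos (K+1) hK1
  have hlt := hdec K hK
  set t1 := (1 + d K)⁻¹ with ht1
  set t2 := (1 + d (K+1))⁻¹ with ht2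
  have hpt1 : 0 < t1 := by rw [ht1]; positivity
  have hpt2 : 0 < t2 := by rw [ht2]; positivity
  have ht12 : t1 < t2 := by
    rw [ht1, ht2]
    exact inv_strictAnti₀ (by linarith) (by linarith)
  have hA1 : 0 < A + t1^2 := by positivity
  have hA2 : 0 < A + t2^2 := by positivity
  have hsq : t1^2 ≤ t2^2 := by nlinarith
  have hden1 : 0 < 1 + B / (A + t1^2) := by
    rw [show 1 + B/(A+t1^2) = (A + B + t1^2)/(A+t1^2) by field_simp; ring]
    exact div_pos (by nlinarith) hA1
  have hdenle : 1 + B / (A + t1^2) ≤ 1 + B / (A + t2^2) := by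
    have hBle : B / (A + t1^2) ≤ B / (A + t2^2) := by
      rw [div_le_div_iff₀ hA1 hA2]
      nlinarith [mul_nonneg (neg_nonneg.2 hB) (sub_nonneg.2 hsq)]
    linarith
  have hn2 : 0 < ((K:ℝ)+1) * d (K+1) := by
    have : (0:ℝ) < (K:ℝ) + 1 := by positivity
    positivity
  exact div_le_div₀ (by nlinarith [hKd K hK]) (le_of_lt (hKd K hK)) hden1 hdenle
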